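/- The map t ↦ t̃ sending finite binary trees to snakes is surjective onto the set of snakes: every snake is of the form t̃ for some finite binary tree t. -/

import Mathlib

inductive BTree | bot | node (l r : BTree)

def Snake (x : List ℕ) : Prop :=
  x = [0] ∨
    (x ≠ [] ∧ x.head? = some 2 ∧ x.getLast? = some 0 ∧
      (∀ i, i + 1 < x.length → 0 < x[i]!) ∧
      (∀ i, i + 1 < x.length → x[i + 1]! = x[i]! + 1 ∨ x[i]! = x[i + 1]! + 1))

def oplus (x y : List ℕ) : List ℕ := 2 :: (x.map (· + 1) ++ y)

def tilde : BTree → List ℕ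
  | .bot => [0]
  | .node l r => oplus (tilde l) (tilde r)

lemma getElem_bang_eq (l : List ℕ) (i : ℕ) (h : i < l.length) : l[i]! = l[i] :=
  getElem!_pos l i h

lemma snake_aux : ∀ n (x : List ℕ), x.length ≤ n → Snake x → ∃ t : BTree, tilde t = x := by
  intro n
  induction n with
  | zero =>
    intro x hlen hx
    have hx0 : x = [] := List.length_eq_zero_iff.mp (Nat.le_zero.mp hlen)
    subst hx0
    rcases hx with h | ⟨h, _⟩ <;> simp at h
  | succ n ih =>
    intro x hlen hx
    rcases hx with rfl | ⟨hne, hhead, hlast, hpos, hadj⟩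
    · exact ⟨.bot, rfl⟩
    obtain ⟨hd, t, rfl⟩ := List.exists_cons_of_ne_nil hne
    have hhd : hd = 2 := by simpa using hhead
    subst hhd
    set m := t.length with hm
    -- t is nonempty and its last entry is 0
    have htne : t ≠ [] := by
      rintro rfl
      simp [List.getLast?] at hlast
    have hmpos : 0 < m := List.length_pos_iff.mpr htne
    have hlastT : t[m - 1]! = 0 := by
      rw [List.getLast?_eq_getElem?] at hlast
      have hlen1 : (2 :: t).length - 1 = m := by simp [hm]
      rw [hlen1, show m = m - 1 + 1 from by omega, List.getElem?_cons_succ] at hlast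
      obtain ⟨h, heq⟩ := List.getElem?_eq_some_iff.mp hlast
      rw [getElem_bang_eq t (m-1) h, heq]
    -- transfer pos/adj to t
    have hposT : ∀ i, i + 1 < m → 0 < t[i]! := by
      intro i hi
      have := hpos (i + 1) (by simp only [List.length_cons]; omega)
      simpa using this
    have hadjT : ∀ i, i + 1 < m → t[i + 1]! = t[i]! + 1 ∨ t[i]! = t[i + 1]! + 1 := by
      intro i hi
      have := hadj (i + 1) (by simp only [List.length_cons]; omega)
      simpa using this
    have h0 : t[0]! = 3 ∨ t[0]! = 1 := by
      have := hadj 0 (by simp; omega)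
      simp at this
      rw [List.getElem!_eq_getElem?_getD]
      omega
    -- m ≥ 2 : otherwise x = [2,0] contradicting adjacency
    have hm2 : 2 ≤ m := by
      by_contra h
      have hm1 : m = 1 := by omega
      have h00 : t[0]! = 0 := by rw [← hlastT]; congr 1; omega
      omega
    -- there is a 1 in t : at position m-2
    have hex : ∃ j, t[j]! = 1 ∧ j < m := by
      refine ⟨m - 2, ?_, by omega⟩
      have := hadjT (m - 2) (by omega)
      have heq : m - 2 + 1 = m - 1 := by omega
      rw [heq] at this
      omega
    classical
    set j := Nat.find hex with hjdef
    obtain ⟨hj1, hjm⟩ := Nat.find_spec hex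
    rw [← hjdef] at hj1 hjm
    have hjmin : ∀ i, i < j → ¬(t[i]! = 1 ∧ i < m) := fun i hi => Nat.find_min hex hi
    -- entries before j are ≥ 2
    have hge2 : ∀ i, i < j → 2 ≤ t[i]! := by
      intro i hij
      have hne1 : ¬(t[i]! = 1 ∧ i < m) := hjmin i hij
      have hpos' : 0 < t[i]! := hposT i (by omega)
      have : i < m := by omega
      omega
    -- j is not the last position
    have hjlt : j + 1 < m := by
      rcases Nat.lt_or_ge (j + 1) m with h | h
      · exact h
      · exfalso
        have : j = m - 1 := by omega
        rw [this] at hj1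
        omega
    -- the entry after j is 0 or 2
    have hj2 : t[j + 1]! = 0 ∨ t[j + 1]! = 2 := by
      have := hadjT j hjlt
      omega
    set u : List ℕ := t.take (j + 1) with hu
    set y : List ℕ := t.drop (j + 1) with hy
    have hulen : u.length = j + 1 := by simp [hu]; omega
    have hylen : y.length = m - (j + 1) := by simp [hy]; omega
    have huget : ∀ i, i < j + 1 → u[i]! = t[i]! := by
      intro i hi
      rw [getElem_bang_eq u i (by omega), getElem_bang_eq t i (by omega)]
      simp [hu]
    have hyget : ∀ i, i < m - (j + 1) → y[i]! = t[j + 1 + i]! := by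
      intro i hi
      rw [getElem_bang_eq y i (by omega), getElem_bang_eq t (j+1+i) (by omega)]
      simp [hy]
    -- y is a snake
    have hsy : Snake y := by
      rcases hj2 with h2 | h2
      · -- t[j+1]! = 0, must be the last entry, y = [0]
        have hjend : j + 1 = m - 1 := by
          by_contra hc
          have hplt : (j + 2) + 1 < (2 :: t).length := by simp; omega
          have := hpos (j + 2) hplt
          have : (2 :: t)[j + 2]! = t[j + 1]! := by simp
          omega
        have hy1 : y.length = 1 := by omega
        left
        have : y[0]! = 0 := by rw [hyget 0 (by omega)]; simpa using h2
        rcases y with _ | ⟨a, ys⟩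
        · simp at hy1
        · simp at hy1 ⊢
          subst hy1
          simpa using this
      · -- t[j+1]! = 2, y is a proper snake
        right
        have hyne : y ≠ [] := by
          intro hc
          rw [hc] at hylen
          simp at hylen
          omega
        refine ⟨hyne, ?_, ?_, ?_, ?_⟩
        · rw [List.head?_eq_getElem?]
          have : y[0]? = some (y[0]'(by omega)) := List.getElem?_eq_getElem _
          rw [this, ← getElem_bang_eq y 0 (by omega), hyget 0 (by omega)]
          simpa using h2
        · rw [List.getLast?_eq_getElem?]
          have hylpos : 0 < y.length := by omega
          have : y[y.length - 1]? = some (y[y.length - 1]'(by omega)) :=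
            List.getElem?_eq_getElem _
          rw [this, ← getElem_bang_eq y (y.length - 1) (by omega)]
          rw [hylen]
          rw [hyget (m - (j+1) - 1) (by omega)]
          have : j + 1 + (m - (j + 1) - 1) = m - 1 := by omega
          rw [this, hlastT]
        · intro i hi
          rw [hylen] at hi
          rw [hyget i (by omega)]
          exact hposT (j + 1 + i) (by omega)
        · intro i hi
          rw [hylen] at hi
          rw [hyget i (by omega), hyget (i+1) (by omega)]
          have := hadjT (j + 1 + i) (by omega)
          have heq : j + 1 + i + 1 = j + 1 + (i + 1) := by omega
          rw [heq] at this
          exact this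
    -- u' = u.map (· - 1) is a snake
    set u' : List ℕ := u.map (· - 1) with hu'
    have hu'len : u'.length = j + 1 := by simp [hu', hulen]
    have hu'get : ∀ i, i < j + 1 → u'[i]! = u[i]! - 1 := by
      intro i hi
      rw [getElem_bang_eq u' i (by omega), getElem_bang_eq u i (by omega)]
      simp [hu']
    have hsu' : Snake u' := by
      rcases Nat.eq_zero_or_pos j with hj0 | hjpos
      · left
        have h1 : u'.length = 1 := by rw [hu'len, hj0]
        have h2 : u'[0]! = 0 := by
          rw [hu'get 0 (by omega), huget 0 (by omega)]
          have ht01 := hj1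
          rw [hj0] at ht01
          omega
        rcases u' with _ | ⟨a, us⟩
        · simp at h1
        · simp at h1 ⊢
          subst h1
          simpa using h2
      · right
        have hu'ne : u' ≠ [] := by
          intro hc
          rw [hc] at hu'len
          simp at hu'len
        have ht03 : t[0]! = 3 := by
          have := hge2 0 hjpos
          omega
        refine ⟨hu'ne, ?_, ?_, ?_, ?_⟩
        · rw [List.head?_eq_getElem?]
          have : u'[0]? = some (u'[0]'(by omega)) := List.getElem?_eq_getElem _
          rw [this, ← getElem_bang_eq u' 0 (by omega), hu'get 0 (by omega),
            huget 0 (by omega), ht03]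
        · rw [List.getLast?_eq_getElem?]
          have : u'[u'.length - 1]? = some (u'[u'.length - 1]'(by omega)) :=
            List.getElem?_eq_getElem _
          rw [this, ← getElem_bang_eq u' (u'.length - 1) (by omega), hu'len]
          simp only [Nat.add_sub_cancel]
          rw [hu'get j (by omega), huget j (by omega), hj1]
        · intro i hi
          rw [hu'len] at hi
          rw [hu'get i (by omega), huget i (by omega)]
          have := hge2 i (by omega)
          omega
        · intro i hi
          rw [hu'len] at hi
          rw [hu'get i (by omega), huget i (by omega),
            hu'get (i+1) (by omega), huget (i+1) (by omega)]
          have h1 := hadjT i (by omega)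
          have h2 := hge2 i (by omega)
          have h3 : 1 ≤ t[i+1]! := by
            rcases Nat.lt_or_ge (i + 1) j with h | h
            · have := hge2 (i+1) h
              omega
            · have : i + 1 = j := by omega
              rw [this, hj1]
          omega
    -- apply induction hypothesis
    have hxlen : m + 1 ≤ n + 1 := by simpa using hlen
    obtain ⟨l, hl⟩ := ih u' (by omega) hsu'
    obtain ⟨r, hr⟩ := ih y (by omega) hsy
    refine ⟨.node l r, ?_⟩
    rw [tilde, hl, hr, oplus]
    have hmap : u'.map (· + 1) = u := by
      rw [hu', List.map_map]
      have : ∀ a ∈ u, (a - 1) + 1 = a := by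
        intro a ha
        obtain ⟨i, hi, rfl⟩ := List.getElem_of_mem ha
        rw [hulen] at hi
        have : u[i]! = u[i]'(by omega) := getElem_bang_eq u i (by omega)
        rw [← this, huget i hi]
        rcases Nat.lt_or_ge i j with h | h
        · have := hge2 i h
          omega
        · have : i = j := by omega
          rw [this, hj1]
      calc u.map (((· + 1)) ∘ (· - 1)) = u.map id := List.map_congr_left (by
              intro a ha
              simpa using this a ha)
        _ = u := List.map_id u
    rw [hmap]
    have : u ++ y = t := List.take_append_drop (j + 1) t
    rw [this]

theorem tilde_surjective_onto_snakes (x : List ℕ) (hx : Snake x) :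
    ∃ t : BTree, tilde t = x := by
  exact snake_aux x.length x le_rfl hx
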